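/- For every positive integer n, \(\overline{M}(n) = \sum_{d \mid n} \varphi(d) \sum_{\substack{\delta \mid n\\ \gcd(\delta,d)=1}} \mu(\delta) \cdot \#\{A \subseteq \{1,\ldots,n\} : A \ne \emptyset,\ (A) \equiv 1 \ (\mathrm{mod}\ d),\ \delta \mid (A)\}\), where \(\varphi\) is Euler's totient function and \(\mu\) is the Möbius function. -/
import Mathlib


open Finset ArithmeticFunction

/-- `Mbar n = ∑ ((A) - 1, n)`, summed over all nonempty subsets `A` of `{1, 2, ..., n}`
such that the gcd `(A)` of the elements of `A` is relatively prime to `n`. -/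
def Mbar (n : ℕ) : ℕ :=
  ∑ A ∈ (Finset.Icc 1 n).powerset.filter
      (fun A => A.Nonempty ∧ Nat.gcd (A.gcd _root_.id) n = 1),
    Nat.gcd (A.gcd _root_.id - 1) n

lemma sum_moebius_divisors (k : ℕ) :
    ∑ d ∈ k.divisors, (moebius d : ℤ) = if k = 1 then 1 else 0 := by
  rw [← coe_mul_zeta_apply, moebius_mul_coe_zeta, ArithmeticFunction.one_apply]

lemma gcd_eq_sum_totient (m n : ℕ) (hn : n ≠ 0) :
    (Nat.gcd m n : ℤ) = ∑ d ∈ n.divisors.filter (· ∣ m), (Nat.totient d : ℤ) := by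
  have hset : n.divisors.filter (· ∣ m) = (Nat.gcd m n).divisors := by
    ext d
    simp only [Nat.mem_divisors, Finset.mem_filter, Nat.dvd_gcd_iff]
    constructor
    · rintro ⟨⟨hd, _⟩, hm⟩
      exact ⟨⟨hm, hd⟩, Nat.gcd_ne_zero_right hn⟩
    · rintro ⟨⟨hm, hd⟩, _⟩
      exact ⟨⟨hd, hn⟩, hm⟩
  rw [hset]
  rw [← Nat.cast_sum]
  exact_mod_cast congrArg (Nat.cast (R := ℤ)) (Nat.sum_totient _).symm

lemma moebius_sum_eq (m n : ℕ) (hn : n ≠ 0) :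
    ∑ δ ∈ n.divisors.filter (· ∣ m), (moebius δ : ℤ)
      = if Nat.gcd m n = 1 then 1 else 0 := by
  have hset : n.divisors.filter (· ∣ m) = (Nat.gcd m n).divisors := by
    ext d
    simp only [Nat.mem_divisors, Finset.mem_filter, Nat.dvd_gcd_iff]
    constructor
    · rintro ⟨⟨hd, _⟩, hm⟩
      exact ⟨⟨hm, hd⟩, Nat.gcd_ne_zero_right hn⟩
    · rintro ⟨⟨hm, hd⟩, _⟩
      exact ⟨⟨hd, hn⟩, hm⟩
  rw [hset, sum_moebius_divisors]

theorem Mbar_eq_card_form (n : ℕ) (hn : 0 < n) :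
    (Mbar n : ℤ) = ∑ d ∈ n.divisors, (Nat.totient d : ℤ) *
      ∑ δ ∈ n.divisors.filter (fun δ => Nat.gcd δ d = 1), (moebius δ) *
        (((Finset.Icc 1 n).powerset.filter
            (fun A => A.Nonempty ∧ A.gcd _root_.id % d = 1 % d ∧
              δ ∣ A.gcd _root_.id)).card : ℤ) := by
  have hn' : n ≠ 0 := hn.ne'
  set S := (Finset.Icc 1 n).powerset.filter (fun A => A.Nonempty) with hS
  -- basic fact: for A ∈ S, 1 ≤ A.gcd id
  have hg1 : ∀ A ∈ S, 1 ≤ A.gcd _root_.id := by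
    intro A hA
    rw [hS, Finset.mem_filter, Finset.mem_powerset] at hA
    obtain ⟨hsub, ⟨x, hx⟩⟩ := hA
    have hxd : A.gcd _root_.id ∣ x := Finset.gcd_dvd hx
    have hx1 : 1 ≤ x := (Finset.mem_Icc.mp (hsub hx)).1
    exact Nat.pos_of_dvd_of_pos hxd hx1
  -- for A ∈ S, the mod condition equals divisibility
  have hmod : ∀ A ∈ S, ∀ d : ℕ, (A.gcd _root_.id % d = 1 % d ↔ d ∣ A.gcd _root_.id - 1) := by
    intro A hA d
    have := hg1 A hA
    constructor
    · intro h
      exact (Nat.modEq_iff_dvd' this).mp h.symm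
    · intro h
      exact ((Nat.modEq_iff_dvd' this).mpr h).symm
  -- Step 1: LHS as a sum over S
  have hL : (Mbar n : ℤ) = ∑ A ∈ S,
      (if Nat.gcd (A.gcd _root_.id) n = 1 then (Nat.gcd (A.gcd _root_.id - 1) n : ℤ) else 0) := by
    rw [Mbar]
    push_cast
    rw [hS]
    rw [Finset.sum_filter]
    rw [← Finset.sum_filter_add_sum_filter_not ((Finset.Icc 1 n).powerset)
      (fun A => A.Nonempty)]
    have h2 : ∑ A ∈ (Finset.Icc 1 n).powerset.filter (fun A => ¬A.Nonempty),
        (if A.Nonempty ∧ Nat.gcd (A.gcd _root_.id) n = 1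
          then (Nat.gcd (A.gcd _root_.id - 1) n : ℤ) else 0) = 0 := by
      apply Finset.sum_eq_zero
      intro A hA
      rw [Finset.mem_filter] at hA
      rw [if_neg (fun h => hA.2 h.1)]
    rw [h2, add_zero]
    apply Finset.sum_congr rfl
    intro A hA
    rw [Finset.mem_filter] at hA
    by_cases h : Nat.gcd (A.gcd _root_.id) n = 1
    · rw [if_pos ⟨hA.2, h⟩, if_pos h]
    · rw [if_neg (fun hh => h hh.2), if_neg h]
  rw [hL]
  -- Step 2: rewrite each summand as a double divisor sum
  have hterm : ∀ A ∈ S,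
      (if Nat.gcd (A.gcd _root_.id) n = 1 then (Nat.gcd (A.gcd _root_.id - 1) n : ℤ) else 0)
        = ∑ d ∈ n.divisors, ∑ δ ∈ n.divisors,
            (if d ∣ A.gcd _root_.id - 1 ∧ δ ∣ A.gcd _root_.id
              then (Nat.totient d : ℤ) * moebius δ else 0) := by
    intro A hA
    have e1 := gcd_eq_sum_totient (A.gcd _root_.id - 1) n hn'
    have e2 := moebius_sum_eq (A.gcd _root_.id) n hn'
    have : (if Nat.gcd (A.gcd _root_.id) n = 1 then (Nat.gcd (A.gcd _root_.id - 1) n : ℤ) else 0)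
        = (∑ d ∈ n.divisors.filter (· ∣ A.gcd _root_.id - 1), (Nat.totient d : ℤ))
          * (∑ δ ∈ n.divisors.filter (· ∣ A.gcd _root_.id), (moebius δ : ℤ)) := by
      rw [e2]
      by_cases h : Nat.gcd (A.gcd _root_.id) n = 1
      · rw [if_pos h, if_pos h, mul_one, e1]
      · rw [if_neg h, if_neg h, mul_zero]
    rw [this, Finset.sum_mul_sum]
    rw [Finset.sum_filter]
    apply Finset.sum_congr rfl
    intro d _
    rw [Finset.sum_filter]
    by_cases hd : d ∣ A.gcd _root_.id - 1
    · rw [if_pos hd]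
      apply Finset.sum_congr rfl
      intro δ _
      by_cases hδ : δ ∣ A.gcd _root_.id
      · rw [if_pos hδ, if_pos ⟨hd, hδ⟩]
      · rw [if_neg hδ, if_neg (fun h => hδ h.2)]
    · rw [if_neg hd]
      symm
      apply Finset.sum_eq_zero
      intro δ _
      rw [if_neg (fun h => hd h.1)]
  rw [Finset.sum_congr rfl hterm]
  -- Step 3: rewrite RHS. First, card as a sum over S.
  have hcard : ∀ d δ : ℕ,
      (((Finset.Icc 1 n).powerset.filter
          (fun A => A.Nonempty ∧ A.gcd _root_.id % d = 1 % d ∧ δ ∣ A.gcd _root_.id)).card : ℤ)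
        = ∑ A ∈ S, (if d ∣ A.gcd _root_.id - 1 ∧ δ ∣ A.gcd _root_.id then 1 else 0) := by
    intro d δ
    rw [Finset.card_filter]
    push_cast
    rw [hS, Finset.sum_filter]
    apply Finset.sum_congr rfl
    intro A hA
    by_cases hne : A.Nonempty
    · have hAS : A ∈ S := by rw [hS, Finset.mem_filter]; exact ⟨hA, hne⟩
      have hm := hmod A hAS d
      rw [if_pos hne]
      by_cases h1 : d ∣ A.gcd _root_.id - 1
      · by_cases h2 : δ ∣ A.gcd _root_.id
        · rw [if_pos ⟨hne, hm.mpr h1, h2⟩, if_pos ⟨h1, h2⟩]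
        · rw [if_neg (fun h => h2 h.2.2), if_neg (fun h => h2 h.2)]
      · rw [if_neg (fun h => h1 (hm.mp h.2.1)), if_neg (fun h => h1 h.1)]
    · rw [if_neg (fun h => hne h.1), if_neg hne]
  -- Extend the δ filter to all divisors (terms with gcd δ d ≠ 1 vanish)
  have hextend : ∀ d ∈ n.divisors,
      (∑ δ ∈ n.divisors.filter (fun δ => Nat.gcd δ d = 1), (moebius δ : ℤ) *
        (((Finset.Icc 1 n).powerset.filter
            (fun A => A.Nonempty ∧ A.gcd _root_.id % d = 1 % d ∧
              δ ∣ A.gcd _root_.id)).card : ℤ))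
      = ∑ δ ∈ n.divisors, (moebius δ : ℤ) *
          ∑ A ∈ S, (if d ∣ A.gcd _root_.id - 1 ∧ δ ∣ A.gcd _root_.id then 1 else 0) := by
    intro d _
    rw [Finset.sum_filter]
    apply Finset.sum_congr rfl
    intro δ hδ
    by_cases hco : Nat.gcd δ d = 1
    · rw [if_pos hco, hcard d δ]
    · rw [if_neg hco]
      symm
      rw [Finset.sum_eq_zero, mul_zero]
      intro A hA
      rw [if_neg]
      rintro ⟨h1, h2⟩
      apply hco
      have hdvd1 : Nat.gcd δ d ∣ A.gcd _root_.id :=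
        (Nat.gcd_dvd_left δ d).trans h2
      have hdvd2 : Nat.gcd δ d ∣ A.gcd _root_.id - 1 :=
        (Nat.gcd_dvd_right δ d).trans h1
      have hsub : A.gcd _root_.id - (A.gcd _root_.id - 1) = 1 := by
        have := hg1 A hA
        omega
      have := Nat.dvd_sub hdvd1 hdvd2
      rw [hsub] at this
      exact Nat.dvd_one.mp this
  -- Step 4: finish by swapping sums
  rw [Finset.sum_comm]
  apply Finset.sum_congr rfl
  intro d hd
  rw [hextend d hd, Finset.mul_sum, Finset.sum_comm]
  apply Finset.sum_congr rfl
  intro δ _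
  rw [Finset.mul_sum, Finset.mul_sum]
  apply Finset.sum_congr rfl
  intro A _
  by_cases h : d ∣ A.gcd _root_.id - 1 ∧ δ ∣ A.gcd _root_.id
  · rw [if_pos h, if_pos h, mul_one]
  · rw [if_neg h, if_neg h, mul_zero, mul_zero]
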